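/- Let AX*_basic be the result of replacing axiom schema D2 with the inference rule D2+ in AX+_basic. Then for every endogenous variable X with finite range R(X) and every allowed intervention Y ← y, the D2 instance [Y ← y](⋁_{x ∈ R(X)} X = x) is derivable in AX*_basic. -/

import Mathlib

namespace Causal

/-- A signature: exogenous variables `U`, endogenous variables `V`, a universe
of values `Val`, range functions `RU`, `RV`, and a set `Int` of allowed
interventions (partial assignments of in-range values to endogenous variables). -/
structure Signature : Type 1 where
  U : Type
  V : Type
  Val : Type
  RU : U → Set Val
  RV : V → Set Val
  RU_nonempty : ∀ Y, (RU Y).Nonempty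
  RV_nonempty : ∀ X, (RV X).Nonempty
  Int : Set (V → Option Val)
  Int_ok : ∀ I ∈ Int, ∀ X x, I X = some x → x ∈ RV X

variable {S : Signature}

/-- A finite signature: finitely many variables, each with finite range. -/
def Signature.IsFinite (S : Signature) : Prop :=
  Finite S.U ∧ Finite S.V ∧ (∀ Y, (S.RU Y).Finite) ∧ (∀ X, (S.RV X).Finite)

/-- An intervention is valid if it only sets variables to values in their ranges. -/
def ValidInt (S : Signature) (I : S.V → Option S.Val) : Prop :=
  ∀ X x, I X = some x → x ∈ S.RV X

/-- A universal signature: all (valid) interventions are allowed. -/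
def Signature.Universal (S : Signature) : Prop :=
  S.Int = {I | ValidInt S I}

/-- A context: an assignment of in-range values to the exogenous variables. -/
def Context (S : Signature) : Type := {u : S.U → S.Val // ∀ Y, u Y ∈ S.RU Y}

/-- An assignment of in-range values to the endogenous variables (an outcome). -/
def Assignment (S : Signature) : Type := {v : S.V → S.Val // ∀ X, v X ∈ S.RV X}

open Classical in
/-- `updInt I X x` is the intervention `I; X ← x`. -/
noncomputable def updInt (I : S.V → Option S.Val) (X : S.V) (x : S.Val) :
    S.V → Option S.Val :=
  fun Y => if Y = X then some x else I Y

/-- Events: Boolean combinations of primitive events `X = x` (with `x ∈ R(X)`). -/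
inductive Event (S : Signature) : Type where
  | tru : Event S
  | prim : (X : S.V) → (x : S.Val) → x ∈ S.RV X → Event S
  | not : Event S → Event S
  | and : Event S → Event S → Event S
  | or : Event S → Event S → Event S

namespace Event

def imp (a b : Event S) : Event S := Event.or (Event.not a) b

/-- Satisfaction of an event by an assignment. -/
def sat (v : Assignment S) : Event S → Prop
  | .tru => True
  | .prim X x _ => v.1 X = x
  | .not e => ¬ Event.sat v e
  | .and a b => Event.sat v a ∧ Event.sat v b
  | .or a b => Event.sat v a ∨ Event.sat v b

/-- Boolean evaluation of an event under an arbitrary valuation of its atoms;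
used to define propositional tautologies. -/
def evalB (val : S.V → S.Val → Bool) : Event S → Bool
  | .tru => true
  | .prim X x _ => val X x
  | .not e => !(Event.evalB val e)
  | .and a b => Event.evalB val a && Event.evalB val b
  | .or a b => Event.evalB val a || Event.evalB val b

/-- An event is a propositional tautology if it is true under every Boolean
valuation of its primitive events. -/
def Taut (e : Event S) : Prop := ∀ val, Event.evalB val e = true

/-- The value `x` of variable `X` is mentioned in the event. -/
def mentionsVal (X : S.V) (x : S.Val) : Event S → Prop
  | .tru => False
  | .prim X' x' _ => X' = X ∧ x' = x
  | .not e => Event.mentionsVal X x e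
  | .and a b => Event.mentionsVal X x a ∨ Event.mentionsVal X x b
  | .or a b => Event.mentionsVal X x a ∨ Event.mentionsVal X x b

def bigAnd (l : List (Event S)) : Event S := l.foldr Event.and Event.tru

def bigOr (l : List (Event S)) : Event S := l.foldr Event.or (Event.not Event.tru)

/-- The disjunction `⋁_{x ∈ l} X = x`. -/
def disjEq (X : S.V) (l : List {x : S.Val // x ∈ S.RV X}) : Event S :=
  bigOr (l.map fun x => Event.prim X x.1 x.2)

/-- The conjunction `⋀ X = x` over a list of (variable, value) pairs. -/
def conjEqL (l : List ((X : S.V) × {x : S.Val // x ∈ S.RV X})) : Event S :=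
  bigAnd (l.map fun p => Event.prim p.1 p.2.1 p.2.2)

/-- Conjunctive formulas: conjunctions of literals `X = x` and `X ≠ x`. -/
inductive Conjunctive : Event S → Prop
  | tru : Conjunctive Event.tru
  | eq (X x hx) : Conjunctive (Event.prim X x hx)
  | ne (X x hx) : Conjunctive (Event.not (Event.prim X x hx))
  | and {a b} : Conjunctive a → Conjunctive b → Conjunctive (Event.and a b)

/-- The set of conjuncts of a (conjunctive) formula. -/
def conjuncts : Event S → Set (Event S)
  | .tru => ∅
  | .and a b => Event.conjuncts a ∪ Event.conjuncts b
  | e => {e}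

/-- Membership in the restricted language: only named variables and named values. -/
def InLang (W : Set S.V) (R' : S.V → Set S.Val) : Event S → Prop
  | .tru => True
  | .prim X x _ => X ∈ W ∧ x ∈ R' X
  | .not e => Event.InLang W R' e
  | .and a b => Event.InLang W R' a ∧ Event.InLang W R' b
  | .or a b => Event.InLang W R' a ∧ Event.InLang W R' b

end Event

/-- Causal formulas: Boolean combinations of atomic formulas `[Y ← y]φ`
with `Y ← y` an allowed intervention and `φ` an event. -/
inductive CForm (S : Signature) : Type where
  | tru : CForm S
  | box : (I : S.V → Option S.Val) → I ∈ S.Int → Event S → CForm S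
  | not : CForm S → CForm S
  | and : CForm S → CForm S → CForm S
  | or : CForm S → CForm S → CForm S

namespace CForm

def imp (a b : CForm S) : CForm S := CForm.or (CForm.not a) b

def iff (a b : CForm S) : CForm S := CForm.and (imp a b) (imp b a)

/-- `⟨Y ← y⟩φ` abbreviates `¬[Y ← y]¬φ`. -/
def dia (I : S.V → Option S.Val) (hI : I ∈ S.Int) (e : Event S) : CForm S :=
  CForm.not (CForm.box I hI (Event.not e))

/-- Satisfaction of a causal formula at a context, relative to an outcome map `O`. -/
def sat (O : (I : S.V → Option S.Val) → I ∈ S.Int → Context S → Set (Assignment S))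
    (u : Context S) : CForm S → Prop
  | .tru => True
  | .box I hI e => ∀ v ∈ O I hI u, e.sat v
  | .not φ => ¬ CForm.sat O u φ
  | .and a b => CForm.sat O u a ∧ CForm.sat O u b
  | .or a b => CForm.sat O u a ∨ CForm.sat O u b

/-- Boolean evaluation of a causal formula under an arbitrary valuation of its
atomic formulas; used to define propositional tautologies. -/
def evalB (val : (S.V → Option S.Val) → Event S → Bool) : CForm S → Bool
  | .tru => true
  | .box I _ e => val I e
  | .not φ => !(CForm.evalB val φ)
  | .and a b => CForm.evalB val a && CForm.evalB val b
  | .or a b => CForm.evalB val a || CForm.evalB val b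

/-- A causal formula is an instance of a propositional tautology if it is true
under every Boolean valuation of its atomic formulas. -/
def Taut (φ : CForm S) : Prop := ∀ val, CForm.evalB val φ = true

/-- The value `x` of variable `X` is mentioned in the causal formula
(either in a primitive event or in an intervention). -/
def mentionsVal (X : S.V) (x : S.Val) : CForm S → Prop
  | .tru => False
  | .box I _ e => I X = some x ∨ e.mentionsVal X x
  | .not φ => CForm.mentionsVal X x φ
  | .and a b => CForm.mentionsVal X x a ∨ CForm.mentionsVal X x b
  | .or a b => CForm.mentionsVal X x a ∨ CForm.mentionsVal X x b

def bigAnd (l : List (CForm S)) : CForm S := l.foldr CForm.and CForm.tru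

def bigOr (l : List (CForm S)) : CForm S := l.foldr CForm.or (CForm.not CForm.tru)

/-- Membership in the restricted language `L_{W,R',I'}(S)`. -/
def InLang (W : Set S.V) (R' : S.V → Set S.Val) (I' : Set (S.V → Option S.Val)) :
    CForm S → Prop
  | .tru => True
  | .box I _ e => I ∈ I' ∧ e.InLang W R'
  | .not φ => CForm.InLang W R' I' φ
  | .and a b => CForm.InLang W R' I' a ∧ CForm.InLang W R' I' b
  | .or a b => CForm.InLang W R' I' a ∧ CForm.InLang W R' I' b

end CForm

/-- A structural equations model over `S`: each endogenous variable gets an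
equation determining its value from the values of all other variables
(formally, `F X u v` does not depend on `v X`). -/
structure SEM (S : Signature) where
  F : S.V → (S.U → S.Val) → (S.V → S.Val) → S.Val
  F_range : ∀ X uu vv, F X uu vv ∈ S.RV X
  F_indep_self : ∀ X uu vv vv', (∀ Y, Y ≠ X → vv Y = vv' Y) → F X uu vv = F X uu vv'

namespace SEM

/-- The outcomes of a SEM under an intervention: solutions of the modified equations. -/
def outcomes (M : SEM S) (u : Context S) (I : S.V → Option S.Val) :
    Set (Assignment S) :=
  {v | ∀ X, (∀ x, I X = some x → v.1 X = x) ∧ (I X = none → v.1 X = M.F X u.1 v.1)}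

def sat (M : SEM S) (u : Context S) (φ : CForm S) : Prop :=
  φ.sat (fun I _ u' => M.outcomes u' I) u

def Valid (M : SEM S) (φ : CForm S) : Prop := ∀ u, M.sat u φ

/-- `X` is independent of `Y` in context `uu`: the equation for `X` does not
depend on the value of `Y`. -/
def IndepAt (M : SEM S) (uu : S.U → S.Val) (X Y : S.V) : Prop :=
  ∀ vv vv', (∀ Z, Z ≠ Y → vv Z = vv' Z) → M.F X uu vv = M.F X uu vv'

/-- An acyclic (recursive) SEM. -/
def Acyclic (M : SEM S) : Prop :=
  ∀ u : Context S, ∃ lt : S.V → S.V → Prop, IsStrictTotalOrder S.V lt ∧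
    ∀ X Y, lt X Y → M.IndepAt u.1 X Y

end SEM

/-- A generalized structural equations model: an arbitrary (effective) map from
allowed interventions and contexts to sets of outcomes. -/
structure GSEM (S : Signature) where
  F : (I : S.V → Option S.Val) → I ∈ S.Int → Context S → Set (Assignment S)
  effective : ∀ I hI u v, v ∈ F I hI u → ∀ X x, I X = some x → v.1 X = x

namespace GSEM

def sat (M : GSEM S) (u : Context S) (φ : CForm S) : Prop :=
  φ.sat M.F u

def Valid (M : GSEM S) (φ : CForm S) : Prop := ∀ u, M.sat u φ

/-- A finitary GSEM: all outcome sets are finite. -/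
def Finitary (M : GSEM S) : Prop := ∀ I hI u, (M.F I hI u).Finite

end GSEM

/-- Equivalence of two GSEMs: same outcomes for all contexts and allowed interventions. -/
def GSEM.equiv (M M' : GSEM S) : Prop := ∀ I hI u, M.F I hI u = M'.F I hI u

/-- `L(S)`-equivalence of two GSEMs: they agree on all causal formulas. -/
def GSEM.LEquiv (M M' : GSEM S) : Prop := ∀ u φ, M.sat u φ ↔ M'.sat u φ

/-- Equivalence of a SEM and a GSEM. -/
def SEM.equivGSEM (M : SEM S) (M' : GSEM S) : Prop :=
  ∀ (I : S.V → Option S.Val) (hI : I ∈ S.Int) (u : Context S),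
    M.outcomes u I = M'.F I hI u

/-- The projection of an outcome set to a single variable. -/
def projSet (T : Set (Assignment S)) (Y : S.V) : Set S.Val := (fun v => v.1 Y) '' T

/-- The restriction of an outcome set to a set of variables. -/
def restrictSet (T : Set (Assignment S)) (Wv : Set S.V) : Set (Wv → S.Val) :=
  (fun (v : Assignment S) (Y : Wv) => v.1 Y.1) '' T

/-! ### Axiom schemas -/

/-- D0: all instances of propositional tautologies. -/
def AxD0 (S : Signature) : Set (CForm S) := {φ | φ.Taut}

/-- D1 (functionality): `[Y ← y](X = x ⇒ X ≠ x')` for `x ≠ x'`. -/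
def AxD1 (S : Signature) : Set (CForm S) :=
  {φ | ∃ (I : S.V → Option S.Val) (hI : I ∈ S.Int) (X : S.V) (x x' : S.Val)
      (hx : x ∈ S.RV X) (hx' : x' ∈ S.RV X), x ≠ x' ∧
    φ = CForm.box I hI (Event.imp (Event.prim X x hx) (Event.not (Event.prim X x' hx')))}

/-- D2 (definiteness): `[Y ← y](⋁_{x ∈ R(X)} X = x)`. -/
def AxD2 (S : Signature) : Set (CForm S) :=
  {φ | ∃ (I : S.V → Option S.Val) (hI : I ∈ S.Int) (X : S.V)
      (l : List {x : S.Val // x ∈ S.RV X}),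
    (∀ x : {x : S.Val // x ∈ S.RV X}, x ∈ l) ∧ φ = CForm.box I hI (Event.disjEq X l)}

/-- D3 (composition): `⟨X ← x⟩(W = w ∧ φ) ⇒ ⟨X ← x; W ← w⟩φ`. -/
def AxD3 (S : Signature) : Set (CForm S) :=
  {ψ | ∃ (I : S.V → Option S.Val) (hI : I ∈ S.Int) (W : S.V) (w : S.Val)
      (hw : w ∈ S.RV W) (hIW : updInt I W w ∈ S.Int) (e : Event S),
    ψ = CForm.imp (CForm.dia I hI (Event.and (Event.prim W w hw) e))
          (CForm.dia (updInt I W w) hIW e)}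

/-- D4 (effectiveness): `[X ← x](X = x)`. -/
def AxD4 (S : Signature) : Set (CForm S) :=
  {φ | ∃ (I : S.V → Option S.Val) (hI : I ∈ S.Int) (X : S.V) (x : S.Val)
      (hx : x ∈ S.RV X), I X = some x ∧ φ = CForm.box I hI (Event.prim X x hx)}

/-- D5 (reversibility), with `Z = V − (X ∪ {W, Y})`. -/
def AxD5 (S : Signature) : Set (CForm S) :=
  {φ | ∃ (I : S.V → Option S.Val) (hI : I ∈ S.Int) (Y : S.V) (y : S.Val)
      (hy : y ∈ S.RV Y) (W : S.V) (w : S.Val) (hw : w ∈ S.RV W)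
      (hIY : updInt I Y y ∈ S.Int) (hIW : updInt I W w ∈ S.Int)
      (lZ : List ((X : S.V) × {x : S.Val // x ∈ S.RV X})),
    (lZ.map Sigma.fst).Nodup ∧
    (∀ Z : S.V, (∃ p ∈ lZ, p.1 = Z) ↔ (I Z = none ∧ Z ≠ W ∧ Z ≠ Y)) ∧
    φ = CForm.imp
      (CForm.and
        (CForm.dia (updInt I Y y) hIY (Event.and (Event.prim W w hw) (Event.conjEqL lZ)))
        (CForm.dia (updInt I W w) hIW (Event.and (Event.prim Y y hy) (Event.conjEqL lZ))))
      (CForm.dia I hI (Event.and (Event.prim W w hw)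
        (Event.and (Event.prim Y y hy) (Event.conjEqL lZ))))}

/-- A disjunct of the formula `Y ⇝ Z` ("Y affects Z"). -/
noncomputable def ltComp (I : S.V → Option S.Val) (hI : I ∈ S.Int) (Y : S.V) (y : S.Val)
    (hIY : updInt I Y y ∈ S.Int) (Z : S.V) (z z' : S.Val)
    (hz : z ∈ S.RV Z) (hz' : z' ∈ S.RV Z) : CForm S :=
  CForm.and (CForm.box I hI (Event.prim Z z hz))
    (CForm.box (updInt I Y y) hIY (Event.prim Z z' hz'))

/-- `φ` is (an instance of) the formula `Y ⇝ Z`: the disjunction, over all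
interventions `X ← x`, values `y ∈ R(Y)` and `z ≠ z' ∈ R(Z)`, of
`[X ← x](Z = z) ∧ [X ← x; Y ← y](Z = z')`. -/
def IsLeadsTo (Y Z : S.V) (φ : CForm S) : Prop :=
  ∃ l : List (CForm S),
    (∀ ψ ∈ l, ∃ (I : S.V → Option S.Val) (hI : I ∈ S.Int) (y : S.Val)
        (_ : y ∈ S.RV Y) (hIY : updInt I Y y ∈ S.Int) (z z' : S.Val)
        (hz : z ∈ S.RV Z) (hz' : z' ∈ S.RV Z), z ≠ z' ∧
        ψ = ltComp I hI Y y hIY Z z z' hz hz') ∧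
    (∀ (I : S.V → Option S.Val) (hI : I ∈ S.Int) (y : S.Val), y ∈ S.RV Y →
      ∀ (hIY : updInt I Y y ∈ S.Int) (z z' : S.Val) (hz : z ∈ S.RV Z)
        (hz' : z' ∈ S.RV Z), z ≠ z' →
        ltComp I hI Y y hIY Z z z' hz hz' ∈ l) ∧
    φ = CForm.bigOr l

/-- D6 (recursiveness): `(X₀ ⇝ X₁ ∧ … ∧ X_{k−1} ⇝ X_k) ⇒ ¬(X_k ⇝ X₀)`. -/
def AxD6 (S : Signature) : Set (CForm S) :=
  {φ | ∃ (k : ℕ) (Xs : Fin (k+1) → S.V) (fs : Fin k → CForm S) (g : CForm S),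
    (∀ i : Fin k, IsLeadsTo (Xs i.castSucc) (Xs i.succ) (fs i)) ∧
    IsLeadsTo (Xs (Fin.last k)) (Xs 0) g ∧
    φ = CForm.imp (CForm.bigAnd (List.ofFn fs)) (CForm.not g)}

/-- D7 (distribution): `([X ← x]φ ∧ [X ← x](φ ⇒ ψ)) ⇒ [X ← x]ψ`. -/
def AxD7 (S : Signature) : Set (CForm S) :=
  {φ | ∃ (I : S.V → Option S.Val) (hI : I ∈ S.Int) (a b : Event S),
    φ = CForm.imp (CForm.and (CForm.box I hI a) (CForm.box I hI (Event.imp a b)))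
          (CForm.box I hI b)}

/-- D8 (generalization): `[X ← x]φ` for `φ` a propositional tautology. -/
def AxD8 (S : Signature) : Set (CForm S) :=
  {φ | ∃ (I : S.V → Option S.Val) (hI : I ∈ S.Int) (e : Event S), e.Taut ∧
    φ = CForm.box I hI e}

/-- D9 (unique outcomes for `V − {X}`): `⟨Y ← y⟩true ∧ (⟨Y ← y⟩φ ⇒ [Y ← y]φ)`
for `Y = V − {X}`. -/
def AxD9 (S : Signature) : Set (CForm S) :=
  {φ | ∃ (I : S.V → Option S.Val) (hI : I ∈ S.Int) (X : S.V) (e : Event S),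
    I X = none ∧ (∀ Z, Z ≠ X → I Z ≠ none) ∧
    φ = CForm.and (CForm.dia I hI Event.tru)
          (CForm.imp (CForm.dia I hI e) (CForm.box I hI e))}

/-- Halpern's version of D9: `⟨Y ← y⟩true ∧ ⋁_{x ∈ R(X)} [Y ← y](X = x)`
for `Y = V − {X}`. -/
def AxHD9 (S : Signature) : Set (CForm S) :=
  {φ | ∃ (I : S.V → Option S.Val) (hI : I ∈ S.Int) (X : S.V)
      (l : List {x : S.Val // x ∈ S.RV X}),
    I X = none ∧ (∀ Z, Z ≠ X → I Z ≠ none) ∧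
    (∀ x : {x : S.Val // x ∈ S.RV X}, x ∈ l) ∧
    φ = CForm.and (CForm.dia I hI Event.tru)
          (CForm.bigOr (l.map fun x => CForm.box I hI (Event.prim X x.1 x.2)))}

/-- D10(a) (at least one outcome): `⟨Y ← y⟩true`. -/
def AxD10a (S : Signature) : Set (CForm S) :=
  {φ | ∃ (I : S.V → Option S.Val) (hI : I ∈ S.Int), φ = CForm.dia I hI Event.tru}

/-- D10(b) (at most one outcome): `⟨Y ← y⟩φ ⇒ [Y ← y]φ`. -/
def AxD10b (S : Signature) : Set (CForm S) :=
  {φ | ∃ (I : S.V → Option S.Val) (hI : I ∈ S.Int) (e : Event S),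
    φ = CForm.imp (CForm.dia I hI e) (CForm.box I hI e)}

/-! ### The axiom schema D6⁺ -/

/-- `X_{-i} = ȳ` : the conjunction of `X_j = g j` over the indices `j ≠ i`. -/
def Event.conjEqVec {k : ℕ} (Xs : Fin k → S.V)
    (g : ∀ j : Fin k, {x : S.Val // x ∈ S.RV (Xs j)}) (i : Fin k) : Event S :=
  Event.bigAnd (((List.finRange k).filter (fun j => j ≠ i)).map
    fun j => Event.prim (Xs j) (g j).1 (g j).2)

/-- A disjunct of the formula `X_i ⇝_{I',U₁,…,U_k,X₁,…,X_k} X_{−i}`: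
`[I; X_i ← x](X_{−i} = ȳ) ∧ [I; X_i ← x'](X_{−i} ≠ ȳ)`. -/
noncomputable def affComp {k : ℕ} (Xs : Fin k → S.V) (i : Fin k) (I : S.V → Option S.Val)
    (x x' : {v : S.Val // v ∈ S.RV (Xs i)})
    (hx : updInt I (Xs i) x.1 ∈ S.Int) (hx' : updInt I (Xs i) x'.1 ∈ S.Int)
    (g : ∀ j : Fin k, {v : S.Val // v ∈ S.RV (Xs j)}) : CForm S :=
  CForm.and (CForm.box (updInt I (Xs i) x.1) hx (Event.conjEqVec Xs g i))
    (CForm.box (updInt I (Xs i) x'.1) hx' (Event.not (Event.conjEqVec Xs g i)))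

/-- `φ` is (an instance of) the formula `X_i ⇝_{I',U₁,…,U_k,X₁,…,X_k} X_{−i}`. -/
def IsAffects {k : ℕ} (Xs : Fin k → S.V) (Us : Fin k → Set S.Val)
    (Is : Set (S.V → Option S.Val)) (i : Fin k) (φ : CForm S) : Prop :=
  ∃ l : List (CForm S),
    (∀ ψ ∈ l, ∃ (I : S.V → Option S.Val) (x x' : {v : S.Val // v ∈ S.RV (Xs i)})
        (hx : updInt I (Xs i) x.1 ∈ S.Int) (hx' : updInt I (Xs i) x'.1 ∈ S.Int)
        (g : ∀ j : Fin k, {v : S.Val // v ∈ S.RV (Xs j)}),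
        I ∈ Is ∧ x.1 ∈ Us i ∧ x'.1 ∈ Us i ∧ (∀ j, j ≠ i → (g j).1 ∈ Us j) ∧
        ψ = affComp Xs i I x x' hx hx' g) ∧
    (∀ (I : S.V → Option S.Val), I ∈ Is →
      ∀ (x x' : {v : S.Val // v ∈ S.RV (Xs i)})
        (hx : updInt I (Xs i) x.1 ∈ S.Int) (hx' : updInt I (Xs i) x'.1 ∈ S.Int)
        (g : ∀ j : Fin k, {v : S.Val // v ∈ S.RV (Xs j)}),
        x.1 ∈ Us i → x'.1 ∈ Us i → (∀ j, j ≠ i → (g j).1 ∈ Us j) →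
        affComp Xs i I x x' hx hx' g ∈ l) ∧
    φ = CForm.bigOr l

/-- D6⁺: `⋁_{i=1}^k ¬(X_i ⇝_{I',U₁,…,U_k,X₁,…,X_k} X_{−i})`, one instance for
each finite choice of variables `X₁,…,X_k`, finite value sets `U_i ⊆ R(X_i)`,
and finite set `I'` of allowed interventions. -/
def AxD6p (S : Signature) : Set (CForm S) :=
  {φ | ∃ (k : ℕ) (Xs : Fin k → S.V) (Us : Fin k → Set S.Val)
      (Is : Set (S.V → Option S.Val)) (fs : Fin k → CForm S),
    (∀ j, Us j ⊆ S.RV (Xs j)) ∧ (∀ j, (Us j).Finite) ∧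
    Is ⊆ S.Int ∧ Is.Finite ∧
    (∀ i, IsAffects Xs Us Is i (fs i)) ∧
    φ = CForm.bigOr (List.ofFn fun i => CForm.not (fs i))}

/-! ### Axiom systems and provability -/

def AXplus (S : Signature) : Set (CForm S) :=
  AxD0 S ∪ AxD1 S ∪ AxD2 S ∪ AxD3 S ∪ AxD4 S ∪ AxD5 S ∪ AxD7 S ∪ AxD8 S ∪ AxD9 S

def AXplusRec (S : Signature) : Set (CForm S) :=
  AxD0 S ∪ AxD1 S ∪ AxD2 S ∪ AxD3 S ∪ AxD4 S ∪ AxD6 S ∪ AxD7 S ∪ AxD8 S ∪ AxD9 S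
    ∪ AxD10a S ∪ AxD10b S

def AXbasic (S : Signature) : Set (CForm S) :=
  AxD0 S ∪ AxD1 S ∪ AxD2 S ∪ AxD4 S ∪ AxD7 S ∪ AxD8 S

def AXbasicRec (S : Signature) : Set (CForm S) := AXbasic S ∪ AxD6p S

def AXminus (S : Signature) : Set (CForm S) :=
  AxD0 S ∪ AxD2 S ∪ AxD3 S ∪ AxD6 S ∪ AxD7 S ∪ AxD8 S ∪ AxD10a S ∪ AxD10b S

def AXEQ (S : Signature) : Set (CForm S) :=
  AxD0 S ∪ AxD1 S ∪ AxD2 S ∪ AxD7 S ∪ AxD8 S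

/-- Provability from a set of axioms, with modus ponens. -/
inductive Provable (Ax : Set (CForm S)) : CForm S → Prop
  | ax {φ} : φ ∈ Ax → Provable Ax φ
  | mp {φ ψ} : Provable Ax (CForm.imp φ ψ) → Provable Ax φ → Provable Ax ψ

/-- Provability from a set of axioms, with modus ponens and the inference rule
D2⁺, relative to named variables `W`, named values `R'`, and a language `L`. -/
inductive ProvableStar (Ax : Set (CForm S)) (W : Set S.V) (R' : S.V → Set S.Val)
    (L : Set (CForm S)) : CForm S → Prop
  | ax {φ} : φ ∈ Ax → ProvableStar Ax W R' L φ
  | mp {φ ψ} : ProvableStar Ax W R' L (CForm.imp φ ψ) → ProvableStar Ax W R' L φ →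
      ProvableStar Ax W R' L ψ
  | d2plus {φ : CForm S} {I : S.V → Option S.Val} {hI : I ∈ S.Int} {ψ : Event S}
      {X : S.V} (hXW : X ∈ W)
      (l : List {x : S.Val // x ∈ S.RV X})
      (hsub : ∀ x ∈ l, x.1 ∈ R' X)
      (hmem : ∀ (x : S.Val) (hx : x ∈ S.RV X),
        (CForm.imp φ (CForm.box I hI ψ)).mentionsVal X x →
        (⟨x, hx⟩ : {x : S.Val // x ∈ S.RV X}) ∈ l)
      (hfresh : (∃ x ∈ R' X, ¬ (CForm.imp φ (CForm.box I hI ψ)).mentionsVal X x) →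
        ∃ x ∈ l, ¬ (CForm.imp φ (CForm.box I hI ψ)).mentionsVal X x.1)
      (hL : CForm.imp φ (CForm.box I hI (Event.not ψ)) ∈ L)
      (hprem : ProvableStar Ax W R' L
        (CForm.imp φ (CForm.bigAnd (l.map fun x =>
          CForm.box I hI (Event.imp ψ (Event.not (Event.prim X x.1 x.2)))))))
      : ProvableStar Ax W R' L (CForm.imp φ (CForm.box I hI (Event.not ψ)))

/-! ### Properties of GSEMs -/

/-- Coherence: if `v` is an outcome of `X ← x` and `v` agrees with a finite
extension `X ← x; Y ← y` of the intervention, then `v` is an outcome of the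
extended intervention. -/
def GSEM.Coherent (M : GSEM S) : Prop :=
  ∀ (I₁ : S.V → Option S.Val) (h₁ : I₁ ∈ S.Int) (I₂ : S.V → Option S.Val)
    (h₂ : I₂ ∈ S.Int),
    (∀ X x, I₁ X = some x → I₂ X = some x) →
    {X | I₁ X = none ∧ I₂ X ≠ none}.Finite →
    ∀ (u : Context S) (v : Assignment S), v ∈ M.F I₁ h₁ u →
      (∀ X x, I₂ X = some x → v.1 X = x) → v ∈ M.F I₂ h₂ u

/-- Condition Acyc1 for a GSEM, a context, and a strict order on the variables. -/
def GSEM.Acyc1At (M : GSEM S) (u : Context S) (lt : S.V → S.V → Prop) : Prop :=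
  ∀ (X : S.V) (x x' : S.Val), x ∈ S.RV X → x' ∈ S.RV X →
    ∀ (I : S.V → Option S.Val), I ∈ S.Int →
      ∀ (hx : updInt I X x ∈ S.Int) (hx' : updInt I X x' ∈ S.Int),
        restrictSet (M.F (updInt I X x) hx u) {Y | lt Y X}
          = restrictSet (M.F (updInt I X x') hx' u) {Y | lt Y X}

/-- An acyclic GSEM: for each context there is a total order on the endogenous
variables satisfying Acyc1. -/
def GSEM.Acyclic (M : GSEM S) : Prop :=
  ∀ u : Context S, ∃ lt : S.V → S.V → Prop, IsStrictTotalOrder S.V lt ∧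
    M.Acyc1At u lt

/-! ### Consistency and acceptability -/

/-- A set of formulas is consistent with a provability notion `Pr` if the
negation of the conjunction of no finite subset is provable. -/
def Consistent (Pr : CForm S → Prop) (C : Set (CForm S)) : Prop :=
  ∀ l : List (CForm S), (∀ ψ ∈ l, ψ ∈ C) → ¬ Pr (CForm.not (CForm.bigAnd l))

def MaxConsistent (Pr : CForm S → Prop) (C : Set (CForm S)) : Prop :=
  Consistent Pr C ∧ ∀ ψ ∉ C, ¬ Consistent Pr (insert ψ C)

/-- `C` is acceptable for `⟨Y ← y⟩φ` with respect to `Z`: some conjunctive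
formula `ψ` extends the conjuncts of `φ`, contains a conjunct `Z = z` with `z`
a named value, and `⟨Y ← y⟩ψ ∈ C`. -/
def AcceptableFor (C : Set (CForm S)) (I : S.V → Option S.Val) (hI : I ∈ S.Int)
    (φ : Event S) (R' : S.V → Set S.Val) (Z : S.V) : Prop :=
  ∃ ψ : Event S, ψ.Conjunctive ∧ φ.conjuncts ⊆ ψ.conjuncts ∧
    (∃ (z : S.Val) (hz : z ∈ S.RV Z), z ∈ R' Z ∧ Event.prim Z z hz ∈ ψ.conjuncts) ∧
    CForm.dia I hI ψ ∈ C

end Causal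

namespace Causal

/-- The axioms of `AX*_basic`: the result of removing D2 from `AX⁺_basic`
(D2 is replaced by the inference rule D2⁺, which is built into `ProvableStar`). -/
def AXstarBase (S : Signature) : Set (CForm S) :=
  AxD0 S ∪ AxD1 S ∪ AxD4 S ∪ AxD7 S ∪ AxD8 S

section Aux

variable {S : Signature} {Ax : Set (CForm S)} {W : Set S.V} {R' : S.V → Set S.Val}
  {L : Set (CForm S)}

lemma ps_taut (h0 : AxD0 S ⊆ Ax) {φ : CForm S} (hφ : φ.Taut) :
    ProvableStar Ax W R' L φ := ProvableStar.ax (h0 hφ)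

lemma taut_and_intro (a b : CForm S) :
    (CForm.imp a (CForm.imp b (CForm.and a b))).Taut := by
  intro val
  simp only [CForm.imp, CForm.evalB]
  cases CForm.evalB val a <;> cases CForm.evalB val b <;> rfl

lemma taut_imp_tru (a : CForm S) : (CForm.imp a (CForm.imp CForm.tru a)).Taut := by
  intro val
  simp only [CForm.imp, CForm.evalB]
  cases CForm.evalB val a <;> rfl

lemma ps_and (h0 : AxD0 S ⊆ Ax) {a b : CForm S}
    (ha : ProvableStar Ax W R' L a) (hb : ProvableStar Ax W R' L b) :
    ProvableStar Ax W R' L (CForm.and a b) :=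
  ProvableStar.mp (ProvableStar.mp (ps_taut h0 (taut_and_intro a b)) ha) hb

lemma ps_imp_tru (h0 : AxD0 S ⊆ Ax) {a : CForm S}
    (ha : ProvableStar Ax W R' L a) :
    ProvableStar Ax W R' L (CForm.imp CForm.tru a) :=
  ProvableStar.mp (ps_taut h0 (taut_imp_tru a)) ha

lemma ps_tru (h0 : AxD0 S ⊆ Ax) : ProvableStar Ax W R' L CForm.tru :=
  ps_taut h0 (fun _ => rfl)

lemma ps_bigAnd (h0 : AxD0 S ⊆ Ax) {lst : List (CForm S)}
    (h : ∀ ψ ∈ lst, ProvableStar Ax W R' L ψ) :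
    ProvableStar Ax W R' L (CForm.bigAnd lst) := by
  induction lst with
  | nil => exact ps_tru h0
  | cons a t ih =>
    exact ps_and h0 (h a List.mem_cons_self)
      (ih fun ψ hψ => h ψ (List.mem_cons_of_mem a hψ))

lemma evalB_disjEq_true {X : S.V} {l : List {x : S.Val // x ∈ S.RV X}}
    {x : {x : S.Val // x ∈ S.RV X}} (hx : x ∈ l) (val : S.V → S.Val → Bool)
    (hv : val X x.1 = true) : Event.evalB val (Event.disjEq X l) = true := by
  induction l with
  | nil => cases hx
  | cons a t ih =>
    simp only [Event.disjEq, Event.bigOr, List.map_cons, List.foldr_cons,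
      Event.evalB] at *
    rcases List.mem_cons.mp hx with h | h
    · subst h; simp [hv]
    · simp [ih h]

lemma taut_disj_imp {X : S.V} {l : List {x : S.Val // x ∈ S.RV X}}
    {x : {x : S.Val // x ∈ S.RV X}} (hx : x ∈ l) :
    (Event.imp (Event.not (Event.disjEq X l))
      (Event.not (Event.prim X x.1 x.2))).Taut := by
  intro val
  simp only [Event.imp, Event.evalB]
  by_cases h : val X x.1 = true
  · simp [evalB_disjEq_true hx val h]
  · simp only [Bool.not_eq_true] at h; simp [h]

lemma taut_nn_imp (e : Event S) :
    (Event.imp (Event.not (Event.not e)) e).Taut := by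
  intro val
  simp only [Event.imp, Event.evalB]
  cases Event.evalB val e <;> rfl

end Aux

/-- Let `AX*_basic` be the result of replacing the axiom
schema D2 by the inference rule D2⁺ in `AX⁺_basic`. Then for every endogenous
variable `X` with finite range `R(X)` and every allowed intervention `Y ← y`,
the D2 instance `[Y ← y](⋁_{x ∈ R(X)} X = x)` is derivable in `AX*_basic`. -/
theorem d2_derivable_in_axstar (S : Signature) (R' : S.V → Set S.Val)
    (hR'sub : ∀ X, R' X ⊆ S.RV X)
    (hR'fin : ∀ X, (S.RV X).Finite → R' X = S.RV X)
    (hR'inf : ∀ X, ¬ (S.RV X).Finite → ¬ (R' X).Finite)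
    (X : S.V) (hXfin : (S.RV X).Finite)
    (I : S.V → Option S.Val) (hI : I ∈ S.Int)
    (l : List {x : S.Val // x ∈ S.RV X})
    (hl : ∀ x : {x : S.Val // x ∈ S.RV X}, x ∈ l) :
    ProvableStar (AXstarBase S) Set.univ R' Set.univ
      (CForm.box I hI (Event.disjEq X l)) := by
  have h0 : AxD0 S ⊆ AXstarBase S := fun φ hφ =>
    Or.inl (Or.inl (Or.inl (Or.inl hφ)))
  have h7 : AxD7 S ⊆ AXstarBase S := fun φ hφ => Or.inl (Or.inr hφ)
  have h8 : AxD8 S ⊆ AXstarBase S := fun φ hφ => Or.inr hφ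
  set d := Event.disjEq X l with hd
  set ψ := Event.not d with hψ
  -- premise of D2⁺
  have hprem : ProvableStar (AXstarBase S) Set.univ R' Set.univ
      (CForm.imp CForm.tru (CForm.bigAnd (l.map fun x =>
        CForm.box I hI (Event.imp ψ (Event.not (Event.prim X x.1 x.2)))))) := by
    apply ps_imp_tru h0
    apply ps_bigAnd h0
    intro χ hχ
    rcases List.mem_map.mp hχ with ⟨x, hx, rfl⟩
    exact ProvableStar.ax (h8 ⟨I, hI, _, taut_disj_imp hx, rfl⟩)
  -- apply D2⁺
  have hstep : ProvableStar (AXstarBase S) Set.univ R' Set.univ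
      (CForm.imp CForm.tru (CForm.box I hI (Event.not ψ))) := by
    refine ProvableStar.d2plus (Set.mem_univ X) l ?_ ?_ ?_ (Set.mem_univ _) hprem
    · intro x _
      rw [hR'fin X hXfin]; exact x.2
    · intro x hx _; exact hl ⟨x, hx⟩
    · rintro ⟨x, hxR, hxm⟩
      exact ⟨⟨x, hR'sub X hxR⟩, hl _, hxm⟩
  have hnn : ProvableStar (AXstarBase S) Set.univ R' Set.univ
      (CForm.box I hI (Event.not ψ)) :=
    ProvableStar.mp hstep (ps_tru h0)
  -- from [I]¬¬d derive [I]d via D7 and D8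
  have hd8 : ProvableStar (AXstarBase S) Set.univ R' Set.univ
      (CForm.box I hI (Event.imp (Event.not ψ) d)) :=
    ProvableStar.ax (h8 ⟨I, hI, _, taut_nn_imp d, rfl⟩)
  have hd7 : ProvableStar (AXstarBase S) Set.univ R' Set.univ
      (CForm.imp (CForm.and (CForm.box I hI (Event.not ψ))
        (CForm.box I hI (Event.imp (Event.not ψ) d))) (CForm.box I hI d)) :=
    ProvableStar.ax (h7 ⟨I, hI, Event.not ψ, d, rfl⟩)
  exact ProvableStar.mp hd7 (ps_and h0 hnn hd8)

end Causal
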